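/- Let r ≥ 2 be an integer. There exist positive constants C₁,…,C_r, depending only on r, such that for every r×r complex matrix A and every 1 ≤ k ≤ r: Σ_{i=1}^{k} Σ_{j=i+1}^{r} |A_{j,i}|² ≤ C_k · Σ_{i=1}^{k} | Σ_{j=1}^{i−1} |A_{i,j}|² − Σ_{j=i+1}^{r} |A_{j,i}|² |. -/

import Mathlib

open Finset

/-- there exist positive constants `C₁,…,C_r`, depending only on `r`,
such that for every `r×r` complex matrix `A` and every `k`,
`Σ_{i≤k} Σ_{j>i} |A_{j,i}|² ≤ C_k · Σ_{i≤k} |Σ_{j<i}|A_{i,j}|² − Σ_{j>i}|A_{j,i}|²|`. -/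
theorem matrix_lower_entries_commutator_estimate (r : ℕ) (hr : 2 ≤ r) :
    ∃ C : Fin r → ℝ, (∀ k, 0 < C k) ∧
      ∀ A : Matrix (Fin r) (Fin r) ℂ, ∀ k : Fin r,
        ∑ i ∈ univ.filter (fun i : Fin r => i ≤ k),
          ∑ j ∈ univ.filter (fun j : Fin r => i < j), ‖A j i‖ ^ 2
        ≤ C k *
          ∑ i ∈ univ.filter (fun i : Fin r => i ≤ k),
            |(∑ j ∈ univ.filter (fun j : Fin r => j < i), ‖A i j‖ ^ 2)
              - ∑ j ∈ univ.filter (fun j : Fin r => i < j), ‖A j i‖ ^ 2| := by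
  refine ⟨fun k => 2 ^ (k.val + 1) - 1, ?_, ?_⟩
  · intro k
    have h1 : (1:ℝ) < 2 ^ (k.val + 1) := one_lt_pow₀ one_lt_two (Nat.succ_ne_zero _)
    show (0:ℝ) < 2 ^ (k.val + 1) - 1
    linarith
  intro A k
  set L : Fin r → ℝ := fun i => ∑ j ∈ univ.filter (fun j : Fin r => i < j),
    ‖A j i‖ ^ 2 with hLdef
  set U : Fin r → ℝ := fun i => ∑ j ∈ univ.filter (fun j : Fin r => j < i),
    ‖A i j‖ ^ 2 with hUdef
  set D : Fin r → ℝ := fun i => |U i - L i| with hDdef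
  have hLnn : ∀ i, 0 ≤ L i := fun i => Finset.sum_nonneg fun j _ => sq_nonneg _
  have hDnn : ∀ i, 0 ≤ D i := fun i => abs_nonneg _
  have key : ∀ n : ℕ, ∑ i ∈ univ.filter (fun i : Fin r => i.val < n), L i
      ≤ (2 ^ n - 1) * ∑ i ∈ univ.filter (fun i : Fin r => i.val < n), D i := by
    intro n
    induction n with
    | zero => simp
    | succ n ih =>
      have hTnn : 0 ≤ ∑ i ∈ univ.filter (fun i : Fin r => i.val < n), D i :=
        Finset.sum_nonneg fun i _ => hDnn i
      by_cases h : n < r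
      · set e : Fin r := ⟨n, h⟩ with he
        have hnot : e ∉ univ.filter (fun i : Fin r => i.val < n) := by simp [he]
        have hset : univ.filter (fun i : Fin r => i.val < n + 1)
            = insert e (univ.filter (fun i : Fin r => i.val < n)) := by
          ext i
          simp only [mem_filter, mem_univ, true_and, mem_insert, Fin.ext_iff, he]
          omega
        rw [hset, Finset.sum_insert hnot, Finset.sum_insert hnot]
        have hU : U e ≤ ∑ i ∈ univ.filter (fun i : Fin r => i.val < n), L i := by
          have hseteq : univ.filter (fun j : Fin r => j < e)
              = univ.filter (fun i : Fin r => i.val < n) := by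
            ext j; simp [Fin.lt_def, he]
          rw [hUdef]
          simp only
          rw [hseteq]
          apply Finset.sum_le_sum
          intro j hj
          simp only [mem_filter, mem_univ, true_and] at hj
          have hsub : ({e} : Finset (Fin r)) ⊆ univ.filter (fun x : Fin r => j < x) := by
            intro x hx
            simp only [mem_singleton] at hx
            subst hx
            simp only [mem_filter, mem_univ, true_and, Fin.lt_def, he]
            exact hj
          calc ‖A e j‖ ^ 2 = ∑ x ∈ ({e} : Finset (Fin r)),
                ‖A x j‖ ^ 2 := by simp
            _ ≤ L j := Finset.sum_le_sum_of_subset_of_nonneg hsub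
                (fun _ _ _ => sq_nonneg _)
        have hLe : L e ≤ U e + D e := by
          have h1 : -(D e) ≤ U e - L e := neg_abs_le _
          linarith
        have h3 : (1:ℝ) ≤ 2 ^ n := one_le_pow₀ (by norm_num : (1:ℝ) ≤ 2)
        have h2 : (2:ℝ) ^ (n + 1) = 2 * 2 ^ n := by ring
        rw [h2]
        nlinarith [mul_nonneg (sub_nonneg.2 h3) (hDnn e), hDnn e, hTnn]
      · have hset : univ.filter (fun i : Fin r => i.val < n + 1)
            = univ.filter (fun i : Fin r => i.val < n) := by
          ext i
          simp only [mem_filter, mem_univ, true_and]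
          have := i.isLt
          omega
        rw [hset]
        have hle : (2:ℝ) ^ n - 1 ≤ 2 ^ (n + 1) - 1 := by
          have : (2:ℝ) ^ n ≤ 2 ^ (n + 1) :=
            pow_le_pow_right₀ (by norm_num) (Nat.le_succ n)
          linarith
        exact le_trans ih (mul_le_mul_of_nonneg_right hle hTnn)
  have hset : univ.filter (fun i : Fin r => i ≤ k)
      = univ.filter (fun i : Fin r => i.val < k.val + 1) := by
    ext i
    simp only [mem_filter, mem_univ, true_and, Fin.le_def]
    omega
  calc ∑ i ∈ univ.filter (fun i : Fin r => i ≤ k), L i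
      = ∑ i ∈ univ.filter (fun i : Fin r => i.val < k.val + 1), L i := by rw [hset]
    _ ≤ (2 ^ (k.val + 1) - 1) *
        ∑ i ∈ univ.filter (fun i : Fin r => i.val < k.val + 1), D i := key _
    _ = (2 ^ (k.val + 1) - 1) *
        ∑ i ∈ univ.filter (fun i : Fin r => i ≤ k), D i := by rw [hset]
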